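/- For every abelian group M, the sequence 0 → M → M_(p) ⊕ M[1/p] → M ⊗ ℚ → 0 is exact, where the first map sends m to (m⊗1, m⊗1) and the second sends (x, y) to the difference of their images in M ⊗ ℚ. -/

import Mathlib

open scoped TensorProduct

/-- The subring `ℤ_(p) ⊆ ℚ` (the localization of `ℤ` at the prime `p`): the subring of `ℚ`
generated by the inverses of the integers not divisible by `p`. -/
def ZLocAt (p : ℕ) : Subring ℚ :=
  Subring.closure {x : ℚ | ∃ n : ℤ, ¬ ((p : ℤ) ∣ n) ∧ x * (n : ℚ) = 1}

/-- The subring `ℤ[1/p] ⊆ ℚ`. -/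
def ZOneOver (p : ℕ) : Subring ℚ :=
  Subring.closure {((p : ℚ))⁻¹}

/-- The map `M → M_(p) ⊕ M[1/p]`, `m ↦ (m ⊗ 1, m ⊗ 1)`. -/
noncomputable def fractureFst (p : ℕ) (M : Type*) [AddCommGroup M] :
    M →ₗ[ℤ] (M ⊗[ℤ] ↥(ZLocAt p)) × (M ⊗[ℤ] ↥(ZOneOver p)) :=
  LinearMap.prod
    ((TensorProduct.mk ℤ M ↥(ZLocAt p)).flip 1)
    ((TensorProduct.mk ℤ M ↥(ZOneOver p)).flip 1)

/-- The map `M_(p) ⊕ M[1/p] → M ⊗ ℚ`, `(x, y) ↦ x - y` (the difference of the images). -/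
noncomputable def fractureSnd (p : ℕ) (M : Type*) [AddCommGroup M] :
    (M ⊗[ℤ] ↥(ZLocAt p)) × (M ⊗[ℤ] ↥(ZOneOver p)) →ₗ[ℤ] M ⊗[ℤ] ℚ :=
  LinearMap.coprod
    (LinearMap.lTensor M ((ZLocAt p).subtype.toAddMonoidHom.toIntLinearMap))
    (- LinearMap.lTensor M ((ZOneOver p).subtype.toAddMonoidHom.toIntLinearMap))

lemma mem_ZLocAt_iff {p : ℕ} (hp : p.Prime) {x : ℚ} :
    x ∈ ZLocAt p ↔ ∃ a n : ℤ, ¬ ((p : ℤ) ∣ n) ∧ x * (n : ℚ) = (a : ℚ) := by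
  have hP : Prime (p : ℤ) := Nat.prime_iff_prime_int.mp hp
  constructor
  · intro hx
    induction hx using Subring.closure_induction with
    | mem y hy => obtain ⟨n, hn, h1⟩ := hy; exact ⟨1, n, hn, by push_cast; exact h1⟩
    | zero => exact ⟨0, 1, by simpa using hP.not_dvd_one, by push_cast; ring⟩
    | one => exact ⟨1, 1, by simpa using hP.not_dvd_one, by push_cast; ring⟩
    | add y z hy hz ihy ihz =>
        obtain ⟨a, n, hn, ha⟩ := ihy
        obtain ⟨b, m, hm, hb⟩ := ihz
        refine ⟨a * m + b * n, n * m, fun h => ((hP.dvd_mul.mp h).elim hn hm), ?_⟩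
        push_cast
        rw [add_mul]
        rw [show y * ((n : ℚ) * m) = y * n * m by ring, ha,
          show z * ((n : ℚ) * m) = z * m * n by ring, hb]
    | neg y hy ihy =>
        obtain ⟨a, n, hn, ha⟩ := ihy
        exact ⟨-a, n, hn, by push_cast; rw [neg_mul, ha]⟩
    | mul y z hy hz ihy ihz =>
        obtain ⟨a, n, hn, ha⟩ := ihy
        obtain ⟨b, m, hm, hb⟩ := ihz
        refine ⟨a * b, n * m, fun h => ((hP.dvd_mul.mp h).elim hn hm), ?_⟩
        push_cast
        rw [show y * z * ((n : ℚ) * m) = (y * n) * (z * m) by ring, ha, hb]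
  · rintro ⟨a, n, hn, h⟩
    have hnz : n ≠ 0 := fun h0 => hn (by rw [h0]; exact dvd_zero _)
    have hn0 : (n : ℚ) ≠ 0 := Int.cast_ne_zero.mpr hnz
    have hx : x = (a : ℚ) * ((n : ℚ))⁻¹ := by field_simp [hn0] at h ⊢; linarith [h]
    rw [hx]
    exact mul_mem (intCast_mem _ a)
      (Subring.subset_closure ⟨n, hn, inv_mul_cancel₀ hn0⟩)

lemma mem_ZOneOver_iff {p : ℕ} (hp : p.Prime) {x : ℚ} :
    x ∈ ZOneOver p ↔ ∃ (a : ℤ) (k : ℕ), x * (p : ℚ) ^ k = (a : ℚ) := by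
  have hp0 : (p : ℚ) ≠ 0 := Nat.cast_ne_zero.mpr hp.ne_zero
  constructor
  · intro hx
    induction hx using Subring.closure_induction with
    | mem y hy =>
        rw [Set.mem_singleton_iff] at hy
        exact ⟨1, 1, by rw [hy]; push_cast; field_simp⟩
    | zero => exact ⟨0, 0, by push_cast; ring⟩
    | one => exact ⟨1, 0, by push_cast; ring⟩
    | add y z hy hz ihy ihz =>
        obtain ⟨a, k, ha⟩ := ihy
        obtain ⟨b, l, hb⟩ := ihz
        refine ⟨a * p ^ l + b * p ^ k, k + l, ?_⟩
        push_cast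
        rw [add_mul, pow_add, show y * ((p:ℚ)^k * p^l) = y * p^k * p^l by ring, ha,
          show z * ((p:ℚ)^k * (p:ℚ)^l) = z * p^l * p^k by ring, hb]
    | neg y hy ihy =>
        obtain ⟨a, k, ha⟩ := ihy
        exact ⟨-a, k, by push_cast; rw [neg_mul, ha]⟩
    | mul y z hy hz ihy ihz =>
        obtain ⟨a, k, ha⟩ := ihy
        obtain ⟨b, l, hb⟩ := ihz
        refine ⟨a * b, k + l, ?_⟩
        push_cast
        rw [pow_add, show y * z * ((p:ℚ)^k * (p:ℚ)^l) = (y * p^k) * (z * p^l) by ring, ha, hb]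
  · rintro ⟨a, k, h⟩
    have hx : x = (a : ℚ) * (((p : ℚ))⁻¹) ^ k := by
      rw [← h, inv_pow, mul_assoc, mul_inv_cancel₀ (pow_ne_zero _ hp0), mul_one]
    rw [hx]
    have hmem : ((p : ℚ))⁻¹ ∈ ZOneOver p := Subring.subset_closure (Set.mem_singleton _)
    exact mul_mem (intCast_mem _ a) (pow_mem hmem k)

/-- The multiplicative set of integers not divisible by `p`. -/
def nonDiv (p : ℕ) (hp : p.Prime) : Submonoid ℤ where
  carrier := {n | ¬ ((p : ℤ) ∣ n)}
  one_mem' := by simpa using (Nat.prime_iff_prime_int.mp hp).not_dvd_one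
  mul_mem' := fun {a b} ha hb h =>
    ((Nat.prime_iff_prime_int.mp hp).dvd_mul.mp h).elim ha hb

lemma isLocalization_ZLocAt (p : ℕ) (hp : p.Prime) :
    IsLocalization (nonDiv p hp) ↥(ZLocAt p) where
  map_units := by
    rintro ⟨s, hs⟩
    have hs0 : (s : ℚ) ≠ 0 :=
      Int.cast_ne_zero.mpr (fun h0 => hs (by rw [h0]; exact dvd_zero _))
    have hinv : ((s : ℚ))⁻¹ ∈ ZLocAt p :=
      Subring.subset_closure ⟨s, hs, inv_mul_cancel₀ hs0⟩
    refine IsUnit.of_mul_eq_one ⟨((s : ℚ))⁻¹, hinv⟩ ?_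
    ext
    push_cast
    simp [mul_inv_cancel₀ hs0]
  surj := by
    rintro ⟨z, hz⟩
    obtain ⟨a, n, hn, h⟩ := (mem_ZLocAt_iff hp).mp hz
    refine ⟨(a, ⟨n, hn⟩), ?_⟩
    ext
    push_cast
    exact h
  exists_of_eq := by
    intro a b h
    refine ⟨1, ?_⟩
    have : (a : ℚ) = (b : ℚ) := by
      have := congrArg (fun x : ↥(ZLocAt p) => (x : ℚ)) h
      simpa using this
    simpa using Int.cast_injective this

lemma isLocalization_ZOneOver (p : ℕ) (hp : p.Prime) :
    IsLocalization (Submonoid.powers (p : ℤ)) ↥(ZOneOver p) where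
  map_units := by
    rintro ⟨s, k, rfl⟩
    have hp0 : (p : ℚ) ≠ 0 := Nat.cast_ne_zero.mpr hp.ne_zero
    have hmem : ((p : ℚ))⁻¹ ∈ ZOneOver p := Subring.subset_closure (Set.mem_singleton _)
    refine IsUnit.of_mul_eq_one ⟨((p : ℚ))⁻¹ ^ k, pow_mem hmem k⟩ ?_
    ext
    push_cast
    rw [← mul_pow, mul_inv_cancel₀ hp0, one_pow]
  surj := by
    rintro ⟨z, hz⟩
    obtain ⟨a, k, h⟩ := (mem_ZOneOver_iff hp).mp hz
    refine ⟨(a, ⟨(p : ℤ) ^ k, k, rfl⟩), ?_⟩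
    ext
    push_cast
    exact h
  exists_of_eq := by
    intro a b h
    refine ⟨1, ?_⟩
    have : (a : ℚ) = (b : ℚ) := by
      have := congrArg (fun x : ↥(ZOneOver p) => (x : ℚ)) h
      simpa using this
    simpa using Int.cast_injective this

lemma exists_smul_eq_zero_of_tmul_one_eq_zero (S : Submonoid ℤ) (A : Subring ℚ)
    (hloc : IsLocalization S ↥A) {M : Type*} [AddCommGroup M] {m : M}
    (h : m ⊗ₜ[ℤ] (1 : ↥A) = (0 : M ⊗[ℤ] ↥A)) : ∃ s : S, (s : ℤ) • m = 0 := by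
  haveI := hloc
  have hbc : IsBaseChange ↥A (TensorProduct.mk ℤ ↥A M 1) := TensorProduct.isBaseChange ℤ M ↥A
  haveI := (isLocalizedModule_iff_isBaseChange S ↥A (TensorProduct.mk ℤ ↥A M 1)).mpr hbc
  have h0 : (TensorProduct.mk ℤ ↥A M 1) m = 0 := by
    have hc : (TensorProduct.comm ℤ M ↥A).toLinearMap (m ⊗ₜ[ℤ] (1 : ↥A))
        = (TensorProduct.comm ℤ M ↥A).toLinearMap 0 := by rw [h]
    rw [map_zero] at hc
    simpa [TensorProduct.comm_tmul] using hc
  obtain ⟨s, hs⟩ := (IsLocalizedModule.eq_zero_iff S (TensorProduct.mk ℤ ↥A M 1)).mp h0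
  exact ⟨s, by simpa [Submonoid.smul_def] using hs⟩

/-- The integer-level first map `ℤ → ℤ_(p) × ℤ[1/p]`. -/
noncomputable def zFst (p : ℕ) : ℤ →ₗ[ℤ] ↥(ZLocAt p) × ↥(ZOneOver p) :=
  LinearMap.prod (Algebra.linearMap ℤ ↥(ZLocAt p)) (Algebra.linearMap ℤ ↥(ZOneOver p))

/-- The integer-level second map `ℤ_(p) × ℤ[1/p] → ℚ`. -/
noncomputable def zSnd (p : ℕ) : ↥(ZLocAt p) × ↥(ZOneOver p) →ₗ[ℤ] ℚ :=
  LinearMap.coprod ((ZLocAt p).subtype.toAddMonoidHom.toIntLinearMap)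
    (- (ZOneOver p).subtype.toAddMonoidHom.toIntLinearMap)

lemma zSnd_apply (p : ℕ) (x : ↥(ZLocAt p) × ↥(ZOneOver p)) :
    zSnd p x = (x.1 : ℚ) - (x.2 : ℚ) := by
  simp [zSnd, sub_eq_add_neg]

lemma zFst_apply (p : ℕ) (n : ℤ) :
    zFst p n = ((n : ↥(ZLocAt p)), (n : ↥(ZOneOver p))) := by
  simp [zFst, Algebra.linearMap_apply, map_intCast]

lemma zExact (p : ℕ) (hp : p.Prime) : Function.Exact (zFst p) (zSnd p) := by
  have hP : Prime (p : ℤ) := Nat.prime_iff_prime_int.mp hp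
  rintro ⟨a, b⟩
  rw [zSnd_apply]
  constructor
  · intro h
    have hab : (a : ℚ) = (b : ℚ) := by linarith [h]
    obtain ⟨c, n, hn, hA⟩ := (mem_ZLocAt_iff hp).mp a.2
    obtain ⟨d, k, hB⟩ := (mem_ZOneOver_iff hp).mp b.2
    have hnz : n ≠ 0 := fun h0 => hn (by rw [h0]; exact dvd_zero _)
    have hn0 : (n : ℚ) ≠ 0 := Int.cast_ne_zero.mpr hnz
    have key : c * (p : ℤ) ^ k = d * n := by
      have : (c : ℚ) * ((p : ℚ)) ^ k = (d : ℚ) * (n : ℚ) := by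
        rw [← hA, ← hB, ← hab]; ring
      exact_mod_cast this
    have hcop : IsCoprime (n : ℤ) ((p : ℤ) ^ k) :=
      ((hP.coprime_iff_not_dvd.2 hn).symm).pow_right
    obtain ⟨e, he⟩ : n ∣ c := hcop.dvd_of_dvd_mul_right ⟨d, by linarith [key]⟩
    have hae : (a : ℚ) = (e : ℚ) := by
      have h1 : (a : ℚ) * n = (e : ℚ) * n := by
        rw [hA]
        push_cast [he]
        ring
      exact mul_right_cancel₀ hn0 h1
    refine ⟨e, ?_⟩
    rw [zFst_apply]
    have hbe : (b : ℚ) = (e : ℚ) := hab ▸ hae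
    refine Prod.ext (Subtype.ext ?_) (Subtype.ext ?_)
    · push_cast
      exact hae.symm
    · push_cast
      exact hbe.symm
  · rintro ⟨n, hn⟩
    rw [← hn, zFst_apply]
    push_cast
    ring

lemma zSurj (p : ℕ) (hp : p.Prime) : Function.Surjective (zSnd p) := by
  have hP : Prime (p : ℤ) := Nat.prime_iff_prime_int.mp hp
  intro q
  set k : ℕ := q.den.factorization p with hk
  set n : ℕ := q.den / p ^ k with hn'
  have hd : p ^ k * n = q.den := Nat.ordProj_mul_ordCompl_eq_self q.den p
  have hden0 : q.den ≠ 0 := q.den_pos.ne'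
  have hn : ¬ p ∣ n := Nat.not_dvd_ordCompl hp hden0
  have hnZ : ¬ ((p : ℤ) ∣ (n : ℤ)) := by exact_mod_cast fun h => hn (Int.natCast_dvd_natCast.mp h)
  have hcop : IsCoprime ((p : ℤ) ^ k) (n : ℤ) :=
    (hP.coprime_iff_not_dvd.2 hnZ).pow_left
  obtain ⟨u, v, huv⟩ := hcop
  have hqden : q * (q.den : ℚ) = (q.num : ℚ) := Rat.mul_den_eq_num q
  have hdQ : (p : ℚ) ^ k * (n : ℚ) = (q.den : ℚ) := by exact_mod_cast hd
  have memA : q * (u : ℚ) * (p : ℚ) ^ k ∈ ZLocAt p := by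
    rw [mem_ZLocAt_iff hp]
    refine ⟨u * q.num, n, hnZ, ?_⟩
    push_cast
    rw [show q * (u:ℚ) * (p:ℚ)^k * (n:ℚ) = (u:ℚ) * (q * ((p:ℚ)^k * n)) by ring, hdQ, hqden]
  have memB : q * (v : ℚ) * (n : ℚ) * (p : ℚ) ^ k = ((v * q.num : ℤ) : ℚ) := by
    push_cast
    rw [show q * (v:ℚ) * (n:ℚ) * (p:ℚ)^k = (v:ℚ) * (q * ((p:ℚ)^k * n)) by ring, hdQ, hqden]
  have memB' : -(q * (v : ℚ) * (n : ℚ)) ∈ ZOneOver p := by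
    refine neg_mem ?_
    rw [mem_ZOneOver_iff hp]
    exact ⟨v * q.num, k, memB⟩
  refine ⟨(⟨_, memA⟩, ⟨_, memB'⟩), ?_⟩
  rw [zSnd_apply]
  show q * (u : ℚ) * (p : ℚ) ^ k - (-(q * (v : ℚ) * (n : ℚ))) = q
  have huvQ : (u : ℚ) * (p : ℚ) ^ k + (v : ℚ) * (n : ℚ) = 1 := by exact_mod_cast huv
  calc q * (u : ℚ) * (p : ℚ) ^ k - (-(q * (v : ℚ) * (n : ℚ)))
      = q * ((u : ℚ) * (p : ℚ) ^ k + (v : ℚ) * (n : ℚ)) := by ring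
    _ = q := by rw [huvQ, mul_one]


set_option synthInstance.maxHeartbeats 1000000 in
theorem statement0 (p : ℕ) (hp : p.Prime) (M : Type*) [AddCommGroup M] :
    Function.Injective (fractureFst p M) ∧
    Function.Exact (fractureFst p M) (fractureSnd p M) ∧
    Function.Surjective (fractureSnd p M) := by
  have hP : Prime (p : ℤ) := Nat.prime_iff_prime_int.mp hp
  let e := TensorProduct.prodRight ℤ ℤ M ↥(ZLocAt p) ↥(ZOneOver p)
  have hF : ∀ m : M, fractureFst p M m
      = (m ⊗ₜ[ℤ] (1 : ↥(ZLocAt p)), m ⊗ₜ[ℤ] (1 : ↥(ZOneOver p))) := fun m => rfl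
  have key1 : ∀ m : M,
      e ((LinearMap.lTensor M (zFst p)) (m ⊗ₜ[ℤ] (1 : ℤ))) = fractureFst p M m := by
    intro m
    rw [hF, LinearMap.lTensor_tmul, zFst_apply]
    push_cast
    exact TensorProduct.prodRight_tmul ℤ ℤ M ↥(ZLocAt p) ↥(ZOneOver p) m (1, 1)
  have key2 : ∀ z, fractureSnd p M (e z) = (LinearMap.lTensor M (zSnd p)) z := by
    intro z
    induction z using TensorProduct.induction_on with
    | zero => rw [map_zero, map_zero, map_zero]
    | tmul m x =>
        obtain ⟨a, b⟩ := x
        have : zSnd p (a, b) = (a : ℚ) - (b : ℚ) := zSnd_apply p (a, b)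
        simp only [e, TensorProduct.prodRight_tmul, LinearMap.lTensor_tmul, this,
          TensorProduct.tmul_sub]
        simp [fractureSnd, zSnd, sub_eq_add_neg]
        erw [LinearMap.coprod_apply, LinearMap.neg_apply, LinearMap.lTensor_tmul,
          LinearMap.lTensor_tmul]
        rfl
    | add x y hx hy => simp only [map_add, hx, hy]
  have hMex : Function.Exact (LinearMap.lTensor M (zFst p)) (LinearMap.lTensor M (zSnd p)) :=
    lTensor_exact M (zExact p hp) (zSurj p hp)
  have hMsur : Function.Surjective (LinearMap.lTensor M (zSnd p)) :=
    LinearMap.lTensor_surjective M (zSurj p hp)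
  refine ⟨?_, ?_, ?_⟩
  · rw [injective_iff_map_eq_zero]
    intro m hm
    rw [hF m, Prod.mk_eq_zero] at hm
    obtain ⟨h1, h2⟩ := hm
    obtain ⟨s1, hs1⟩ := exists_smul_eq_zero_of_tmul_one_eq_zero (nonDiv p hp) (ZLocAt p)
      (isLocalization_ZLocAt p hp) h1
    obtain ⟨s2, hs2⟩ := exists_smul_eq_zero_of_tmul_one_eq_zero (Submonoid.powers (p : ℤ))
      (ZOneOver p) (isLocalization_ZOneOver p hp) h2
    obtain ⟨k, hk⟩ := s2.2
    have hn : ¬ ((p : ℤ) ∣ (s1 : ℤ)) := s1.2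
    have hcop : IsCoprime ((s1 : ℤ)) ((p : ℤ) ^ k) :=
      ((hP.coprime_iff_not_dvd.2 hn).symm).pow_right
    obtain ⟨u, v, huv⟩ := hcop
    have hk' : ((p : ℤ)) ^ k • m = 0 := by
      rw [show ((p : ℤ)) ^ k = (s2 : ℤ) from hk, hs2]
    calc m = (1 : ℤ) • m := (one_smul ℤ m).symm
      _ = (u * (s1 : ℤ) + v * (p : ℤ) ^ k) • m := by rw [huv]
      _ = u • ((s1 : ℤ) • m) + v • (((p : ℤ) ^ k) • m) := by
          rw [add_smul, mul_smul, mul_smul]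
      _ = 0 := by rw [hs1, hk']; simp
  · intro y
    constructor
    · intro hy
      have hz : (LinearMap.lTensor M (zSnd p)) (e.symm y) = 0 := by
        rw [← key2, e.apply_symm_apply, hy]
      obtain ⟨x, hx⟩ := (hMex (e.symm y)).mp hz
      refine ⟨(TensorProduct.rid ℤ M) x, ?_⟩
      have hxm : x = ((TensorProduct.rid ℤ M) x) ⊗ₜ[ℤ] (1 : ℤ) := by
        conv_lhs => rw [← (TensorProduct.rid ℤ M).symm_apply_apply x]
        rw [TensorProduct.rid_symm_apply]
      rw [← key1, ← hxm, hx, e.apply_symm_apply]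
    · rintro ⟨m, rfl⟩
      rw [← key1, key2]
      exact hMex.apply_apply_eq_zero (m ⊗ₜ[ℤ] (1 : ℤ))
  · intro q
    obtain ⟨z, hz⟩ := hMsur q
    exact ⟨e z, by rw [key2 z, hz]⟩
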